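/- Let X be a nonempty finite design space, let p be a natural number with 0 < p, and let m : X → Matrix (Fin p) (Fin p) ℝ assign to each design point a symmetric positive semidefinite matrix. Suppose w* is a design (w*(x) ≥ 0, ∑ w* = 1) such that M(w*) = ∑_{x∈X} w*(x) • m(x) is positive definite. Then w* maximizes w ↦ log(det(M(w))) over all designs w with M(w) positive definite if and only if for every x ∈ X, trace(M(w*)⁻¹ * m(x)) ≤ p. -/

import Mathlib

open Matrix BigOperators


lemma trace_eq_sum_eig {n : ℕ} {A : Matrix (Fin n) (Fin n) ℝ} (hA : A.IsHermitian) :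
    A.trace = ∑ i, hA.eigenvalues i := by
  simpa using hA.trace_eq_sum_eigenvalues

open scoped MatrixOrder in
lemma key_logdet {n : ℕ} {A B : Matrix (Fin n) (Fin n) ℝ} (hA : A.PosDef) (hB : B.PosDef) :
    Real.log A.det ≤ Real.log B.det + (B⁻¹ * A).trace - n := by
  have hBi : B⁻¹.PosDef := hB.inv
  set S := CFC.sqrt B⁻¹ with hSdef
  have hS : S.PosSemidef := (CFC.sqrt_nonneg B⁻¹).posSemidef
  have hSS : S * S = B⁻¹ := CFC.sqrt_mul_sqrt_self B⁻¹ hBi.posSemidef.nonneg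
  have hdetB : 0 < B.det := hB.det_pos
  have hdetBi : 0 < B⁻¹.det := hBi.det_pos
  have hdetS : S.det ≠ 0 := by
    intro h
    rw [← hSS, det_mul, h, mul_zero] at hdetBi
    exact lt_irrefl _ hdetBi
  have hSH : Sᴴ = S := hS.1
  have hSunit : IsUnit S := (isUnit_iff_isUnit_det S).2 hdetS.isUnit
  -- C = S A S is positive definite
  have hC : (S * A * S).PosDef := by
    rw [posDef_iff_dotProduct_mulVec]
    constructor
    · have h2 := isHermitian_conjTranspose_mul_mul S hA.1
      rwa [hSH] at h2
    · intro x hx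
      have hinj := mulVec_injective_iff_isUnit.mpr hSunit
      have hxS : S *ᵥ x ≠ 0 := fun h => hx (hinj (by rw [h, mulVec_zero]))
      have h3 := hA.dotProduct_mulVec_pos hxS
      calc (0:ℝ) < star (S *ᵥ x) ⬝ᵥ A *ᵥ (S *ᵥ x) := h3
      _ = star x ⬝ᵥ (S * A * S) *ᵥ x := by
          rw [star_mulVec, hSH, ← dotProduct_mulVec, mulVec_mulVec, mulVec_mulVec, mul_assoc]
  -- trace and det identities
  have htr : (S * A * S).trace = (B⁻¹ * A).trace := by
    rw [trace_mul_comm, ← mul_assoc, hSS]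
  have hdet : (S * A * S).det = B⁻¹.det * A.det := by
    rw [det_mul, det_mul, mul_comm, ← mul_assoc, ← det_mul, hSS]
  -- eigenvalue inequality
  have heig : Real.log (S * A * S).det ≤ (S * A * S).trace - n := by
    have hev := hC.eigenvalues_pos
    have hdet2 : (S * A * S).det = ∏ i, hC.1.eigenvalues i := by
      have := hC.1.det_eq_prod_eigenvalues
      simpa using this
    rw [hdet2, Real.log_prod (fun i _ => (hev i).ne'), trace_eq_sum_eig hC.1]
    have : ∀ i ∈ Finset.univ, Real.log (hC.1.eigenvalues i) ≤ hC.1.eigenvalues i - 1 :=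
      fun i _ => Real.log_le_sub_one_of_pos (hev i)
    calc ∑ i, Real.log (hC.1.eigenvalues i) ≤ ∑ i : Fin n, (hC.1.eigenvalues i - 1) :=
          Finset.sum_le_sum this
      _ = (∑ i, hC.1.eigenvalues i) - n := by rw [Finset.sum_sub_distrib]; simp
  rw [hdet, htr] at heig
  rw [Real.log_mul hdetBi.ne' hA.det_pos.ne', det_nonsing_inv, Ring.inverse_eq_inv', Real.log_inv] at heig
  linarith

lemma posdef_smul' {n : ℕ} {M : Matrix (Fin n) (Fin n) ℝ} {c : ℝ} (hc : 0 < c)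
    (h : M.PosDef) : (c • M).PosDef := by
  exact h.smul hc

lemma possemidef_smul' {n : ℕ} {M : Matrix (Fin n) (Fin n) ℝ} {c : ℝ} (hc : 0 ≤ c)
    (h : M.PosSemidef) : (c • M).PosSemidef := by
  exact h.smul hc
/-- Kiefer–Wolfowitz type equivalence theorem for `D`-optimality over a finite
design space: `w*` maximizes `log det M(w)` iff the sensitivity function
`trace(M(w*)⁻¹ m(x))` is bounded by `p` on the design space. -/
theorem D_optimality_equivalence
    {X : Type*} [Fintype X] [Nonempty X] (p : ℕ) (hp : 0 < p)
    (m : X → Matrix (Fin p) (Fin p) ℝ) (hm : ∀ x, (m x).PosSemidef)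
    (wstar : X → ℝ) (hw0 : ∀ x, 0 ≤ wstar x) (hw1 : ∑ x, wstar x = 1)
    (hM : (∑ x, wstar x • m x).PosDef) :
    (∀ w : X → ℝ, (∀ x, 0 ≤ w x) → ∑ x, w x = 1 → (∑ x, w x • m x).PosDef →
        Real.log (∑ x, w x • m x).det ≤ Real.log (∑ x, wstar x • m x).det) ↔
      (∀ x : X, ((∑ y, wstar y • m y)⁻¹ * m x).trace ≤ (p : ℝ)) := by
  classical
  set B := ∑ x, wstar x • m x with hBdef
  have hBunit : IsUnit B.det := hM.det_pos.ne'.isUnit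
  constructor
  · -- maximality implies sensitivity bound
    intro hmax x0
    by_contra hcon
    push_neg at hcon
    set K := B⁻¹ * (m x0 - B) with hKdef
    have hBB : B⁻¹ * B = 1 := nonsing_inv_mul B hBunit
    have hBB' : B * B⁻¹ = 1 := mul_nonsing_inv B hBunit
    have hc : 0 < K.trace := by
      have : K.trace = (B⁻¹ * m x0).trace - p := by
        rw [hKdef, mul_sub, trace_sub, hBB, trace_one]
        simp
      rw [this]; linarith
    set P := (Matrix.det (1 + (Polynomial.X : Polynomial ℝ) • K.map Polynomial.C)).divX.divX
      with hPdef
    set f : ℝ → ℝ := fun t => K.trace + P.eval t * t with hfdef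
    have hf : Continuous f := by
      apply Continuous.add continuous_const
      exact (Polynomial.continuous P).mul continuous_id
    have hf0 : 0 < f 0 := by simpa [hfdef] using hc
    have h1 : ∀ᶠ t : ℝ in nhds 0, 0 < f t := (hf.tendsto 0).eventually (eventually_gt_nhds hf0)
    have h2 : ∀ᶠ t : ℝ in nhds 0, t < 1 := eventually_lt_nhds one_pos
    obtain ⟨t, ⟨hft, ht1⟩, ht0'⟩ :=
      ((((h1.and h2)).filter_mono (nhdsWithin_le_nhds (s := Set.Ioi (0:ℝ)))).and
        eventually_mem_nhdsWithin).exists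
    have ht0 : 0 < t := ht0'
    set w : X → ℝ := fun x => (1 - t) * wstar x + t * (if x = x0 then 1 else 0) with hwdef
    have hw0' : ∀ x, 0 ≤ w x := by
      intro x
      apply add_nonneg (mul_nonneg (by linarith) (hw0 x))
      apply mul_nonneg ht0.le
      split <;> norm_num
    have hw1' : ∑ x, w x = 1 := by
      rw [hwdef]
      rw [Finset.sum_add_distrib, ← Finset.mul_sum, ← Finset.mul_sum, hw1,
        Finset.sum_ite_eq' Finset.univ x0 (fun _ => (1:ℝ))]
      simp
    have hMt : ∑ x, w x • m x = (1 - t) • B + t • m x0 := by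
      rw [hwdef]
      have e1 : ∀ x : X, ((1 - t) * wstar x + t * if x = x0 then 1 else 0) • m x
          = (1 - t) • wstar x • m x + (if x = x0 then t • m x else 0) := by
        intro x; split <;> simp [add_smul, mul_smul]
      rw [Finset.sum_congr rfl fun x _ => e1 x, Finset.sum_add_distrib, ← Finset.smul_sum,
        ← hBdef, Finset.sum_ite_eq' Finset.univ x0 (fun x => t • m x)]
      simp
    have hMt2 : (1 - t) • B + t • m x0 = B + t • (m x0 - B) := by
      rw [smul_sub, sub_smul, one_smul]; abel
    have hPD' : (∑ x, w x • m x).PosDef := by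
      rw [hMt]
      exact Matrix.PosDef.add_posSemidef (posdef_smul' (by linarith) hM)
        (possemidef_smul' ht0.le (hm x0))
    have hfact : ∑ x, w x • m x = B * (1 + t • K) := by
      rw [hMt, hMt2, mul_add, mul_one, hKdef, mul_smul_comm, ← mul_assoc, hBB', one_mul]
    have hdet : (∑ x, w x • m x).det = B.det * (1 + t * f t) := by
      rw [hfact, det_mul, Matrix.det_one_add_smul t K, ← hPdef, hfdef]
      ring
    have hgt : B.det < (∑ x, w x • m x).det := by
      rw [hdet]
      nlinarith [hM.det_pos, mul_pos ht0 hft]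
    exact absurd (hmax w hw0' hw1' hPD') (not_le.mpr (Real.log_lt_log hM.det_pos hgt))
  · -- sensitivity bound implies maximality
    intro htr w hw0' hw1' hPD
    have hkey := key_logdet hPD hM
    have htrsum : (B⁻¹ * ∑ x, w x • m x).trace = ∑ x, w x * (B⁻¹ * m x).trace := by
      rw [Matrix.mul_sum, trace_sum]
      exact Finset.sum_congr rfl fun x _ => by rw [mul_smul_comm, trace_smul, smul_eq_mul]
    have hle : ∑ x, w x * (B⁻¹ * m x).trace ≤ (p : ℝ) := by
      calc ∑ x, w x * (B⁻¹ * m x).trace ≤ ∑ x, w x * p :=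
            Finset.sum_le_sum fun x _ => mul_le_mul_of_nonneg_left (htr x) (hw0' x)
        _ = (p : ℝ) := by rw [← Finset.sum_mul, hw1', one_mul]
    rw [htrsum] at hkey
    linarith
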